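/- Define f : ℝ → ℝ by f(x) = (cosh x − 1)/x² for x ≠ 0 and f(0) = 1/2. Then f is strictly increasing on [0, ∞). -/

import Mathlib

open Real Set

lemma auxA : ∀ x : ℝ, 0 < x → Real.sinh x < x * Real.cosh x := by
  have h : StrictMonoOn (fun x : ℝ => x * Real.cosh x - Real.sinh x) (Ici 0) := by
    apply strictMonoOn_of_deriv_pos (convex_Ici 0)
    · fun_prop
    · intro x hx
      rw [interior_Ici] at hx
      have hd : HasDerivAt (fun x : ℝ => x * Real.cosh x - Real.sinh x)
          (x * Real.sinh x) x := by
        have := ((hasDerivAt_id x).mul (Real.hasDerivAt_cosh x)).sub (Real.hasDerivAt_sinh x)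
        refine this.congr_deriv ?_; simp [id]; try ring
      rw [hd.deriv]
      exact mul_pos hx (Real.sinh_pos_iff.mpr hx)
  intro x hx
  have := h self_mem_Ici (le_of_lt hx) hx
  simp only [Real.cosh_zero, Real.sinh_zero, mul_one, zero_mul, sub_zero] at this
  linarith

lemma auxB : ∀ x : ℝ, 0 < x → 2 * (Real.cosh x - 1) < x * Real.sinh x := by
  have h : StrictMonoOn (fun x : ℝ => x * Real.sinh x - 2 * (Real.cosh x - 1)) (Ici 0) := by
    apply strictMonoOn_of_deriv_pos (convex_Ici 0)
    · fun_prop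
    · intro x hx
      rw [interior_Ici] at hx
      have hd : HasDerivAt (fun x : ℝ => x * Real.sinh x - 2 * (Real.cosh x - 1))
          (x * Real.cosh x - Real.sinh x) x := by
        have := ((hasDerivAt_id x).mul (Real.hasDerivAt_sinh x)).sub
          (((Real.hasDerivAt_cosh x).sub_const 1).const_mul 2)
        refine this.congr_deriv ?_; simp [id]; try ring
      rw [hd.deriv]
      linarith [auxA x hx]
  intro x hx
  have := h self_mem_Ici (le_of_lt hx) hx
  simp only [Real.cosh_zero, Real.sinh_zero, mul_zero, zero_mul, sub_self, sub_zero] at this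
  linarith

lemma auxC : ∀ x : ℝ, 0 < x → 1 + x ^ 2 / 2 < Real.cosh x := by
  have h : StrictMonoOn (fun x : ℝ => Real.cosh x - 1 - x ^ 2 / 2) (Ici 0) := by
    apply strictMonoOn_of_deriv_pos (convex_Ici 0)
    · fun_prop
    · intro x hx
      rw [interior_Ici] at hx
      have hd : HasDerivAt (fun x : ℝ => Real.cosh x - 1 - x ^ 2 / 2)
          (Real.sinh x - x) x := by
        have := (((Real.hasDerivAt_cosh x).sub_const 1).sub
          ((hasDerivAt_pow 2 x).div_const 2))
        refine this.congr_deriv ?_; simp [id]; try ring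
      rw [hd.deriv]
      have := Real.self_lt_sinh_iff.mpr hx
      linarith
  intro x hx
  have := h self_mem_Ici (le_of_lt hx) hx
  simp only [Real.cosh_zero] at this
  linarith

theorem stmt_7 (f : ℝ → ℝ)
    (hf : ∀ x : ℝ, x ≠ 0 → f x = (Real.cosh x - 1) / x ^ 2)
    (hf0 : f 0 = 1 / 2) :
    StrictMonoOn f (Set.Ici (0 : ℝ)) := by
  have key : StrictMonoOn (fun x : ℝ => (Real.cosh x - 1) / x ^ 2) (Ioi 0) := by
    apply strictMonoOn_of_deriv_pos (convex_Ioi 0)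
    · apply ContinuousOn.div (by fun_prop) (by fun_prop)
      intro x hx
      exact pow_ne_zero 2 (ne_of_gt hx)
    · intro x hx
      rw [interior_Ioi] at hx
      have hne : x ^ 2 ≠ 0 := pow_ne_zero 2 (ne_of_gt hx)
      have hd : HasDerivAt (fun x : ℝ => (Real.cosh x - 1) / x ^ 2)
          ((Real.sinh x * x ^ 2 - (Real.cosh x - 1) * (2 * x)) / (x ^ 2) ^ 2) x := by
        have := ((Real.hasDerivAt_cosh x).sub_const 1).div (hasDerivAt_pow 2 x) hne
        refine this.congr_deriv ?_
        ring_nf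
      rw [hd.deriv]
      apply div_pos _ (by positivity)
      have := mul_lt_mul_of_pos_left (auxB x hx) hx
      nlinarith [this]
  intro a ha b hb hab
  rcases eq_or_lt_of_le (Set.mem_Ici.mp ha : (0:ℝ) ≤ a) with rfl | ha'
  · rw [hf0, hf b (ne_of_gt hab)]
    rw [lt_div_iff₀ (by positivity)]
    have := auxC b hab
    nlinarith
  · rw [hf a (ne_of_gt ha'), hf b (ne_of_gt (ha'.trans hab))]
    exact key ha' (ha'.trans hab) hab
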